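/- Let n ≥ 1, let Ω ⊂ ℝⁿ be a bounded open set containing the origin with (1/λ)·Ω ⊆ Ω for every λ > 1, and assume there is a constant C₁ > 0 such that the Lebesgue measure of (λ·Ω) \ Ω is at most C₁(λ−1) for every λ ∈ (1, 2). Let s ∈ (0,1), let v : ℝⁿ → ℝ be s-Hölder continuous on ℝⁿ with v ≡ 0 on ℝⁿ \ Ω, and let g : Ω → ℝ be bounded and measurable. Then lim_{λ→1⁺} (1/(λ−1)) ∫_{(λ·Ω) \ Ω} v(y/λ)·g(y/λ) dy = 0. -/

import Mathlib

open Real Set MeasureTheory Filter Topology Pointwise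

/-- The boundary-layer estimate in the proof of Theorem 1.1:
`lim_{λ→1⁺} (1/(λ-1)) ∫_{(λΩ)\Ω} v(y/λ) g(y/λ) dy = 0` for a bounded open set `Ω`
containing the origin with `(1/λ)Ω ⊆ Ω` for `λ > 1` and `|(λΩ)\Ω| ≤ C₁(λ-1)`,
`v` being `s`-Hölder on `ℝⁿ` and vanishing outside `Ω`, and `g` bounded measurable. -/
theorem stmt_11 (n : ℕ) (hn : 1 ≤ n)
    (Ω : Set (EuclideanSpace ℝ (Fin n))) (hΩo : IsOpen Ω) (hΩb : Bornology.IsBounded Ω)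
    (h0 : (0 : EuclideanSpace ℝ (Fin n)) ∈ Ω)
    (hstar : ∀ lam : ℝ, 1 < lam → lam⁻¹ • Ω ⊆ Ω)
    (C₁ : ℝ) (hC₁ : 0 < C₁)
    (hmeas : ∀ lam ∈ Ioo (1:ℝ) 2, volume ((lam • Ω) \ Ω) ≤ ENNReal.ofReal (C₁ * (lam - 1)))
    (s : ℝ) (hs : s ∈ Ioo (0:ℝ) 1)
    (v : EuclideanSpace ℝ (Fin n) → ℝ)
    (C₂ : ℝ) (hC₂ : 0 < C₂) (hvH : ∀ x y, |v x - v y| ≤ C₂ * ‖x - y‖ ^ s)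
    (hv0 : ∀ x, x ∉ Ω → v x = 0)
    (g : EuclideanSpace ℝ (Fin n) → ℝ) (hgm : Measurable g)
    (M : ℝ) (hgb : ∀ x ∈ Ω, |g x| ≤ M) :
    Tendsto
      (fun lam : ℝ => (1 / (lam - 1)) *
        ∫ y in (lam • Ω) \ Ω, v (lam⁻¹ • y) * g (lam⁻¹ • y))
      (𝓝[>] 1) (𝓝 0) := by
  obtain ⟨R₀, hR₀⟩ := hΩb.subset_closedBall 0
  set R : ℝ := max R₀ 1 with hRdef
  have hR1 : (1:ℝ) ≤ R := le_max_right _ _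
  have hRpos : (0:ℝ) < R := lt_of_lt_of_le one_pos hR1
  have hΩR : Ω ⊆ Metric.closedBall 0 R :=
    hR₀.trans (Metric.closedBall_subset_closedBall (le_max_left _ _))
  set M' : ℝ := max M 0 with hM'def
  have hM' : 0 ≤ M' := le_max_right _ _
  set K : ℝ := C₂ * (2 * R) ^ s * M' * C₁ with hKdef
  have hKnn : 0 ≤ K := by
    apply mul_nonneg (mul_nonneg (mul_nonneg hC₂.le _) hM') hC₁.le
    exact Real.rpow_nonneg (by positivity) s
  -- squeeze
  have hG : Tendsto (fun lam : ℝ => K * (lam - 1) ^ s) (𝓝[>] 1) (𝓝 0) := by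
    have h1 : Tendsto (fun lam : ℝ => lam - 1) (𝓝[>] 1) (𝓝 0) := by
      have h0' : Tendsto (fun lam : ℝ => lam - 1) (𝓝 1) (𝓝 (1 - 1)) :=
        (continuous_sub_right (1:ℝ)).tendsto 1
      simpa using h0'.mono_left nhdsWithin_le_nhds
    have h2 : Tendsto (fun lam : ℝ => (lam - 1) ^ s) (𝓝[>] 1) (𝓝 0) := by
      have hc : ContinuousAt (fun x : ℝ => x ^ s) 0 :=
        Real.continuousAt_rpow_const 0 s (Or.inr hs.1.le)
      have := hc.tendsto.comp h1
      simpa [Function.comp_def, Real.zero_rpow hs.1.ne'] using this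
    simpa using h2.const_mul K
  apply squeeze_zero_norm' ?_ hG
  filter_upwards [Ioo_mem_nhdsGT_of_mem (left_mem_Ico.mpr one_lt_two)] with lam hlam
  obtain ⟨hlam1, hlam2⟩ := hlam
  have hlam0 : (0:ℝ) < lam := lt_trans one_pos hlam1
  have hlamne : lam ≠ 0 := hlam0.ne'
  have hd : (0:ℝ) < lam - 1 := by linarith
  set A : Set (EuclideanSpace ℝ (Fin n)) := (lam • Ω) \ Ω with hA
  have hAm : MeasurableSet A := (hΩo.smul₀ hlamne).measurableSet.diff hΩo.measurableSet
  have hAvol : volume A ≤ ENNReal.ofReal (C₁ * (lam - 1)) :=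
    hmeas lam ⟨hlam1, hlam2⟩
  have hAfin : volume A < ⊤ :=
    lt_of_le_of_lt hAvol ENNReal.ofReal_lt_top
  -- pointwise bound
  set B : ℝ := C₂ * ((lam - 1) * (2 * R)) ^ s * M' with hBdef
  have hbound : ∀ y ∈ A, ‖v (lam⁻¹ • y) * g (lam⁻¹ • y)‖ ≤ B := by
    rintro y ⟨hy1, hy2⟩
    obtain ⟨x, hxΩ, rfl⟩ := hy1
    have hinv : lam⁻¹ • (lam • x) = x := by
      rw [smul_smul, inv_mul_cancel₀ hlamne, one_smul]
    rw [hinv]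
    have hg : |g x| ≤ M' := le_trans (hgb x hxΩ) (le_max_left _ _)
    have hvy : v (lam • x) = 0 := hv0 _ hy2
    have hnx : ‖x‖ ≤ R := by
      have := hΩR hxΩ
      simpa [Metric.mem_closedBall, dist_eq_norm] using this
    have hnv : |v x| ≤ C₂ * ((lam - 1) * (2 * R)) ^ s := by
      have h1 : |v x - v (lam • x)| ≤ C₂ * ‖x - lam • x‖ ^ s := hvH _ _
      have hxs : x - lam • x = (1 - lam) • x := by
        rw [sub_smul, one_smul]
      have hn : ‖x - lam • x‖ = (lam - 1) * ‖x‖ := by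
        rw [hxs, norm_smul]
        simp [abs_of_nonpos (by linarith : (1:ℝ) - lam ≤ 0)]
      have hle : ‖x - lam • x‖ ≤ (lam - 1) * (2 * R) := by
        rw [hn]
        have : ‖x‖ ≤ 2 * R := by linarith [hnx, hRpos]
        nlinarith [norm_nonneg x]
      have h2 : ‖x - lam • x‖ ^ s ≤ ((lam - 1) * (2 * R)) ^ s :=
        Real.rpow_le_rpow (norm_nonneg _) hle hs.1.le
      calc |v x| = |v x - v (lam • x)| := by rw [hvy, sub_zero]
        _ ≤ C₂ * ‖x - lam • x‖ ^ s := h1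
        _ ≤ C₂ * ((lam - 1) * (2 * R)) ^ s := by
            exact mul_le_mul_of_nonneg_left h2 hC₂.le
    calc ‖v x * g x‖ = |v x| * |g x| := abs_mul _ _
      _ ≤ (C₂ * ((lam - 1) * (2 * R)) ^ s) * M' := by
          apply mul_le_mul hnv hg (abs_nonneg _)
          positivity
      _ = B :=rfl
  have hI : ‖∫ y in A, v (lam⁻¹ • y) * g (lam⁻¹ • y)‖ ≤ B * (volume A).toReal :=
    norm_setIntegral_le_of_norm_le_const hAfin hbound
  have hBnn : 0 ≤ B := by
    apply mul_nonneg (mul_nonneg hC₂.le _) hM'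
    exact Real.rpow_nonneg (by nlinarith) s
  have hvolr : (volume A).toReal ≤ C₁ * (lam - 1) := by
    rw [← ENNReal.ofReal_toReal hAfin.ne] at hAvol
    have := ENNReal.ofReal_le_ofReal_iff (by positivity : (0:ℝ) ≤ C₁ * (lam - 1)) |>.mp hAvol
    exact this
  have hBsplit : B = C₂ * ((lam - 1) ^ s * (2 * R) ^ s) * M' := by
    rw [hBdef, Real.mul_rpow hd.le (by positivity)]
  calc ‖(1 / (lam - 1)) * ∫ y in A, v (lam⁻¹ • y) * g (lam⁻¹ • y)‖
      = (1 / (lam - 1)) * ‖∫ y in A, v (lam⁻¹ • y) * g (lam⁻¹ • y)‖ := by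
        rw [norm_mul, Real.norm_of_nonneg (by positivity)]
    _ ≤ (1 / (lam - 1)) * (B * (C₁ * (lam - 1))) := by
        apply mul_le_mul_of_nonneg_left _ (by positivity)
        calc ‖∫ y in A, v (lam⁻¹ • y) * g (lam⁻¹ • y)‖ ≤ B * (volume A).toReal := hI
          _ ≤ B * (C₁ * (lam - 1)) := mul_le_mul_of_nonneg_left hvolr hBnn
    _ = K * (lam - 1) ^ s := by
        rw [hBsplit, hKdef]; field_simp
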